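/- Consider the linear program: maximize ∑_{i=1}^{N} x_i subject to x_i ≥ 0 and, for each t = 1,…,N, the constraint (1−α)(N−t+1)·x_t − ((1−γ)/γ)·∑_{i=1}^{t−1} x_i ≤ 1, where 0 < γ < 1 and 0 ≤ α < 1. Then the optimal value equals (γ/(1−γ))·(∏_{i=1}^{N}(1 + (1−γ)/(γ(N−i+1)(1−α))) − 1). -/

import Mathlib

section aux

variable (N : ℕ) (c : ℝ) (a : ℕ → ℝ)

/-- closed-form optimal solution -/
noncomputable def lpXstar (t : ℕ) : ℝ := (∏ i ∈ Finset.range t, (1 + c / a i)) / a t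

lemma lp_iio_sum (t : Fin N) (x : Fin N → ℝ) :
    ∑ i ∈ Finset.Iio t, x i = ∑ i ∈ Finset.range t.val,
      (fun j => if h : j < N then x ⟨j, h⟩ else 0) i := by
  refine Finset.sum_nbij' (fun i => (i : ℕ))
    (fun j => if h : j < N then (⟨j, h⟩ : Fin N) else t) ?_ ?_ ?_ ?_ ?_ <;>
    intro b hb <;> simp only [Finset.mem_Iio, Finset.mem_range, Fin.lt_def] at * <;>
    first
    | exact hb
    | (have : b < N := hb.trans t.isLt; simp [this, Fin.lt_def, hb])

lemma lpXstar_sum (hc : c ≠ 0) (ha : ∀ i < N, a i ≠ 0) (k : ℕ) (hk : k ≤ N) :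
    c * ∑ i ∈ Finset.range k, lpXstar c a i + 1 = ∏ i ∈ Finset.range k, (1 + c / a i) := by
  induction k with
  | zero => simp
  | succ n ih =>
    rw [Finset.sum_range_succ, Finset.prod_range_succ, ← ih (le_of_lt hk)]
    have han : a n ≠ 0 := ha n hk
    have : c * lpXstar c a n = (c * ∑ i ∈ Finset.range n, lpXstar c a i + 1) * (c / a n) := by
      rw [ih (le_of_lt hk), lpXstar]; field_simp
    rw [mul_add, this]; ring

/-- upper bound recursion for any feasible x -/
lemma lp_upper (hc : 0 < c) (ha : ∀ i < N, 0 < a i) (x : ℕ → ℝ)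
    (hx0 : ∀ i, 0 ≤ x i)
    (hxc : ∀ t < N, a t * x t - c * ∑ i ∈ Finset.range t, x i ≤ 1)
    (k : ℕ) (hk : k ≤ N) :
    c * ∑ i ∈ Finset.range k, x i + 1 ≤ ∏ i ∈ Finset.range k, (1 + c / a i) := by
  induction k with
  | zero => simp
  | succ n ih =>
    have hn : n < N := hk
    have han := ha n hn
    have hS : 0 ≤ ∑ i ∈ Finset.range n, x i := Finset.sum_nonneg fun i _ => hx0 i
    have h1 : x n ≤ (1 + c * ∑ i ∈ Finset.range n, x i) / a n := by
      rw [le_div_iff₀ han]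
      have := hxc n hn; nlinarith
    have hfac : 0 ≤ 1 + c / a n := by positivity
    have hP : c * ∑ i ∈ Finset.range n, x i + 1 ≤ ∏ i ∈ Finset.range n, (1 + c / a i) :=
      ih (le_of_lt hk)
    rw [Finset.sum_range_succ, Finset.prod_range_succ]
    calc c * (∑ i ∈ Finset.range n, x i + x n) + 1
        ≤ (c * ∑ i ∈ Finset.range n, x i + 1) * (1 + c / a n) := by
          have h2 : c * x n ≤ c * ((1 + c * ∑ i ∈ Finset.range n, x i) / a n) :=
            mul_le_mul_of_nonneg_left h1 (le_of_lt hc)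
          have : c * ((1 + c * ∑ i ∈ Finset.range n, x i) / a n)
              = (c * ∑ i ∈ Finset.range n, x i + 1) * (c / a n) := by
            field_simp; ring
          nlinarith
      _ ≤ (∏ i ∈ Finset.range n, (1 + c / a i)) * (1 + c / a n) :=
          mul_le_mul_of_nonneg_right hP hfac

end aux

/-- Optimal value of the linear program arising in the reverse greedy analysis. -/
theorem lp_optimal_value (N : ℕ) (hN : 1 ≤ N) (γ α : ℝ)
    (hγ0 : 0 < γ) (hγ1 : γ < 1) (hα0 : 0 ≤ α) (hα1 : α < 1) :
    IsGreatest {s : ℝ | ∃ x : Fin N → ℝ, (∀ i, 0 ≤ x i) ∧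
        (∀ t : Fin N,
          (1 - α) * ((N : ℝ) - (t : ℕ)) * x t
            - ((1 - γ) / γ) * ∑ i ∈ Finset.Iio t, x i ≤ 1) ∧
        s = ∑ i, x i}
      ((γ / (1 - γ)) *
        (∏ i ∈ Finset.range N, (1 + (1 - γ) / (γ * ((N : ℝ) - i) * (1 - α))) - 1)) := by
  set c : ℝ := (1 - γ) / γ with hcdef
  have hc : 0 < c := div_pos (by linarith) hγ0
  set a : ℕ → ℝ := fun i => (1 - α) * ((N : ℝ) - i) with hadef
  have ha : ∀ i < N, 0 < a i := by
    intro i hi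
    have : (i : ℝ) < N := by exact_mod_cast hi
    have : (0:ℝ) < (N : ℝ) - i := by linarith
    exact mul_pos (by linarith) this
  have hprod_eq : ∀ k ≤ N, ∏ i ∈ Finset.range k, (1 + (1 - γ) / (γ * ((N : ℝ) - i) * (1 - α)))
      = ∏ i ∈ Finset.range k, (1 + c / a i) := by
    intro k hk
    apply Finset.prod_congr rfl
    intro i hi
    have hi' : i < N := lt_of_lt_of_le (Finset.mem_range.mp hi) hk
    have hai := ha i hi'
    have hNi : ((N:ℝ) - i) ≠ 0 := by
      intro h; rw [hadef] at hai; simp only at hai; rw [h] at hai; simp at hai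
    rw [hcdef, hadef]
    have hα1' : (1:ℝ) - α ≠ 0 := by linarith
    field_simp
  have hval : (γ / (1 - γ)) *
      (∏ i ∈ Finset.range N, (1 + (1 - γ) / (γ * ((N : ℝ) - i) * (1 - α))) - 1)
      = ((∏ i ∈ Finset.range N, (1 + c / a i)) - 1) / c := by
    rw [hprod_eq N le_rfl, hcdef]
    have hγ1' : (1:ℝ) - γ ≠ 0 := by linarith
    field_simp
  rw [hval]
  constructor
  · -- membership: the tight solution
    refine ⟨fun i => lpXstar c a i.val, ?_, ?_, ?_⟩
    · intro i
      have := ha i.val i.isLt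
      have hprodpos : 0 < ∏ j ∈ Finset.range i.val, (1 + c / a j) := by
        apply Finset.prod_pos
        intro j hj
        have := ha j ((Finset.mem_range.mp hj).trans i.isLt)
        positivity
      exact le_of_lt (div_pos hprodpos this)
    · intro t
      rw [lp_iio_sum]
      have hsum : ∑ i ∈ Finset.range t.val,
          (fun j => if h : j < N then lpXstar c a (⟨j, h⟩ : Fin N).val else 0) i
          = ∑ i ∈ Finset.range t.val, lpXstar c a i := by
        apply Finset.sum_congr rfl
        intro i hi
        simp [(Finset.mem_range.mp hi).trans t.isLt]
      rw [hsum]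
      have htight := lpXstar_sum N c a (ne_of_gt hc) (fun i hi => ne_of_gt (ha i hi))
        t.val (le_of_lt t.isLt)
      have hat := ha t.val t.isLt
      have heq : a t.val * lpXstar c a t.val = ∏ i ∈ Finset.range t.val, (1 + c / a i) := by
        rw [lpXstar]; field_simp
      have goal : (1 - α) * ((N : ℝ) - (t : ℕ)) * lpXstar c a t.val
          - c * ∑ i ∈ Finset.range t.val, lpXstar c a i = 1 := by
        have haa : (1 - α) * ((N : ℝ) - (t : ℕ)) = a t.val := rfl
        rw [haa, heq, ← htight]; ring
      linarith [goal.le]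
    · rw [Fin.sum_univ_eq_sum_range (fun i => lpXstar c a i) N]
      have htight := lpXstar_sum N c a (ne_of_gt hc) (fun i hi => ne_of_gt (ha i hi)) N le_rfl
      rw [div_eq_iff (ne_of_gt hc), ← htight]; ring
  · -- upper bound
    rintro s ⟨x, hx0, hxc, rfl⟩
    set x' : ℕ → ℝ := fun j => if h : j < N then x ⟨j, h⟩ else 0 with hx'def
    have hx'0 : ∀ i, 0 ≤ x' i := by
      intro i; rw [hx'def]; dsimp only; split
      · exact hx0 _
      · exact le_refl 0
    have hx'c : ∀ t < N, a t * x' t - c * ∑ i ∈ Finset.range t, x' i ≤ 1 := by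
      intro t ht
      have h := hxc ⟨t, ht⟩
      rw [lp_iio_sum] at h
      simpa [hx'def, ht, hadef, hcdef] using h
    have hub := lp_upper N c a hc ha x' hx'0 hx'c N le_rfl
    have hsum : ∑ i, x i = ∑ i ∈ Finset.range N, x' i := by
      rw [← Fin.sum_univ_eq_sum_range (fun i => x' i) N]
      exact Finset.sum_congr rfl fun i _ => by simp [hx'def, i.isLt]
    rw [hsum, le_div_iff₀ hc]
    linarith
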